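/- Let a ∈ (0,1) and define t₁(β) = (2/√(1+β²))·arcsin√((1−a²)(1+β²)) for β ∈ [−a/√(1−a²), a/√(1−a²)]. Then: (1) t₁ is an even function; (2) t₁ is strictly increasing on [0, a/√(1−a²)] and strictly decreasing on [−a/√(1−a²), 0]; (3) the range of t₁ is the segment [2·arcsin√(1−a²), π·√(1−a²)]. -/

import Mathlib

open Real Set

/-- The candidate sub-Riemannian distance `t₁(β)` in the short-time case. -/
noncomputable def t₁ (a β : ℝ) : ℝ :=
  2 / Real.sqrt (1 + β^2) * Real.arcsin (Real.sqrt ((1 - a^2) * (1 + β^2)))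

lemma arcsin_strictConvexOn : StrictConvexOn ℝ (Set.Icc (0:ℝ) 1) Real.arcsin := by
  apply StrictMonoOn.strictConvexOn_of_deriv (convex_Icc 0 1)
    Real.continuous_arcsin.continuousOn
  rw [interior_Icc, Real.deriv_arcsin]
  intro x hx y hy hxy
  simp only [Set.mem_Ioo] at hx hy
  have h1 : Real.sqrt (1 - y^2) < Real.sqrt (1 - x^2) := by
    apply Real.sqrt_lt_sqrt (by nlinarith)
    nlinarith
  have h2 : 0 < Real.sqrt (1 - y^2) := Real.sqrt_pos.2 (by nlinarith)
  exact one_div_lt_one_div_of_lt h2 h1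

lemma arcsin_ratio_lt {x y : ℝ} (hx : 0 < x) (hxy : x < y) (hy : y ≤ 1) :
    Real.arcsin x / x < Real.arcsin y / y := by
  have h := arcsin_strictConvexOn.secant_strict_mono (a := 0)
    ⟨le_rfl, zero_le_one⟩ ⟨hx.le, by linarith⟩ ⟨by linarith, hy⟩ hx.ne'
    (by linarith : y ≠ 0) hxy
  simpa [Real.arcsin_zero] using h

/-- The function `t₁` is even, strictly increasing on `[0, a/√(1−a²)]`, strictly decreasing
on `[−a/√(1−a²)], 0]`, and its range is `[2 arcsin √(1−a²), π √(1−a²)]`. -/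
theorem t₁_properties (a : ℝ) (ha : a ∈ Set.Ioo (0:ℝ) 1) :
    (∀ β : ℝ, t₁ a (-β) = t₁ a β) ∧
    StrictMonoOn (t₁ a) (Set.Icc 0 (a / Real.sqrt (1 - a^2))) ∧
    StrictAntiOn (t₁ a) (Set.Icc (-(a / Real.sqrt (1 - a^2))) 0) ∧
    t₁ a '' Set.Icc (-(a / Real.sqrt (1 - a^2))) (a / Real.sqrt (1 - a^2)) =
      Set.Icc (2 * Real.arcsin (Real.sqrt (1 - a^2))) (Real.pi * Real.sqrt (1 - a^2)) := by
  obtain ⟨ha0, ha1⟩ := ha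
  set c := Real.sqrt (1 - a^2) with hcdef
  have hc2 : c^2 = 1 - a^2 := Real.sq_sqrt (by nlinarith)
  have hc0 : 0 < c := Real.sqrt_pos.2 (by nlinarith)
  set M := a / c with hMdef
  have hM : 0 < M := div_pos ha0 hc0
  -- evenness
  have heven : ∀ β : ℝ, t₁ a (-β) = t₁ a β := by
    intro β; simp [t₁, neg_sq]
  -- representation
  have hrepr : ∀ β : ℝ, t₁ a β =
      2 * c * (Real.arcsin (c * Real.sqrt (1 + β^2)) / (c * Real.sqrt (1 + β^2))) := by
    intro β
    have hs : 0 < Real.sqrt (1 + β^2) := Real.sqrt_pos.2 (by positivity)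
    rw [t₁, show (1 - a^2) * (1 + β^2) = c^2 * (1 + β^2) by rw [hc2],
      Real.sqrt_mul (by positivity), Real.sqrt_sq hc0.le]
    field_simp
  -- upper bound
  have hub : ∀ β : ℝ, β^2 ≤ M^2 → c * Real.sqrt (1 + β^2) ≤ 1 := by
    intro β h
    have hMsq : M^2 = a^2 / c^2 := by rw [hMdef, div_pow]
    have h' : β^2 * c^2 ≤ a^2 := by
      rwa [hMsq, le_div_iff₀ (by positivity)] at h
    have h2 : 1 + β^2 ≤ 1 / c^2 := by
      rw [le_div_iff₀ (by positivity)]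
      nlinarith
    have h3 : Real.sqrt (1 + β^2) ≤ 1 / c := by
      rw [show (1:ℝ) / c^2 = (1/c)^2 by ring] at h2
      calc Real.sqrt (1 + β^2) ≤ Real.sqrt ((1/c)^2) := Real.sqrt_le_sqrt h2
        _ = 1 / c := Real.sqrt_sq (by positivity)
    calc c * Real.sqrt (1 + β^2) ≤ c * (1/c) := by nlinarith
      _ = 1 := by field_simp
  -- strict monotonicity
  have hmono : StrictMonoOn (t₁ a) (Set.Icc 0 M) := by
    intro β₁ hβ₁ β₂ hβ₂ hlt
    rw [hrepr β₁, hrepr β₂]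
    have hs : Real.sqrt (1 + β₁^2) < Real.sqrt (1 + β₂^2) := by
      apply Real.sqrt_lt_sqrt (by positivity)
      nlinarith [hβ₁.1]
    have hx : 0 < c * Real.sqrt (1 + β₁^2) := by positivity
    have hxy : c * Real.sqrt (1 + β₁^2) < c * Real.sqrt (1 + β₂^2) :=
      (mul_lt_mul_iff_right₀ hc0).2 hs
    have hy1 : c * Real.sqrt (1 + β₂^2) ≤ 1 := by
      apply hub
      nlinarith [hβ₂.1, hβ₂.2]
    have hratio := arcsin_ratio_lt hx hxy hy1
    nlinarith
  -- strict antitonicity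
  have hanti : StrictAntiOn (t₁ a) (Set.Icc (-M) 0) := by
    intro β₁ hβ₁ β₂ hβ₂ hlt
    rw [← heven β₁, ← heven β₂]
    exact hmono ⟨by linarith [hβ₂.1, hβ₂.2], by linarith [hβ₂.1, hβ₂.2]⟩
      ⟨by linarith [hβ₁.1, hβ₁.2], by linarith [hβ₁.1, hβ₁.2]⟩ (by linarith)
  -- endpoint values
  have ht0 : t₁ a 0 = 2 * Real.arcsin c := by
    simp [t₁, hcdef]
  have htM : t₁ a M = Real.pi * c := by
    have h1 : 1 + M^2 = 1 / c^2 := by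
      rw [hMdef]
      field_simp
      linarith [hc2]
    rw [t₁, h1]
    have h2 : (1 - a^2) * (1/c^2) = 1 := by rw [← hc2]; field_simp
    rw [h2, Real.sqrt_one, Real.arcsin_one,
      show (1:ℝ)/c^2 = (1/c)^2 by ring, Real.sqrt_sq (by positivity)]
    field_simp
  -- continuity
  have hcont : Continuous (t₁ a) := by
    apply Continuous.mul
    · apply Continuous.div continuous_const
        (Real.continuous_sqrt.comp (by continuity))
      intro x
      exact (Real.sqrt_pos.2 (by positivity)).ne'
    · exact Real.continuous_arcsin.comp (Real.continuous_sqrt.comp (by continuity))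
  refine ⟨heven, hmono, hanti, ?_⟩
  apply Set.Subset.antisymm
  · rintro _ ⟨β, hβ, rfl⟩
    have h1 : |β| ∈ Set.Icc 0 M := ⟨abs_nonneg β, abs_le.2 ⟨hβ.1, hβ.2⟩⟩
    have h2 : t₁ a β = t₁ a |β| := by
      rcases le_or_gt 0 β with h | h
      · rw [abs_of_nonneg h]
      · rw [abs_of_neg h, heven]
    rw [h2]
    constructor
    · rw [← ht0]
      exact hmono.monotoneOn ⟨le_rfl, hM.le⟩ h1 (abs_nonneg β)
    · rw [← htM]
      exact hmono.monotoneOn h1 ⟨hM.le, le_rfl⟩ h1.2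
  · have hivt := intermediate_value_Icc hM.le hcont.continuousOn
    rw [ht0, htM] at hivt
    exact hivt.trans (Set.image_mono (Set.Icc_subset_Icc (by linarith) le_rfl))
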